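/- Let (S, →, ≺) be a planar set. If e1 → e, e2 → e, e1 ≺ e' ≺ e2, and ¬(e1 → e'), then e' → e. -/
import Mathlib

/-- Lemma A for planar sets: if `e1 → e`, `e2 → e`,
`e1 ≺ e' ≺ e2` and `¬(e1 → e')`, then `e' → e`. -/
theorem stmt_3 {S : Type*} [Fintype S]
    (r : S → S → Prop)
    (hrTrans : ∀ a b c, r a b → r b c → r a c)
    (hrIrrefl : ∀ a, ¬ r a a)
    (lt : S → S → Prop)
    (hltTrans : ∀ a b c, lt a b → lt b c → lt a c)
    (hltIrrefl : ∀ a, ¬ lt a a)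
    (hltTotal : ∀ a b, a ≠ b → lt a b ∨ lt b a)
    (hext : ∀ a b, a ≠ b → r a b → lt a b)
    (hP2 : ∀ s1 s2 s3, s1 ≠ s2 → s1 ≠ s3 → s2 ≠ s3 →
        r s1 s2 → lt s1 s3 → lt s3 s2 → r s3 s2 ∨ r s1 s3)
    (e e' e1 e2 : S)
    (h1 : r e1 e) (h2 : r e2 e)
    (h3 : lt e1 e') (h4 : lt e' e2)
    (h5 : ¬ r e1 e') :
    r e' e := by
  have he2e : e2 ≠ e := by rintro rfl; exact hrIrrefl _ h2
  have hlt2e : lt e2 e := hext _ _ he2e h2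
  have h'e : e' ≠ e := by
    rintro rfl
    exact hltIrrefl _ (hltTrans _ _ _ h4 hlt2e)
  have h1e : e1 ≠ e := by rintro rfl; exact hrIrrefl _ h1
  have h1' : e1 ≠ e' := by rintro rfl; exact hltIrrefl _ h3
  have hlt'e : lt e' e := by
    rcases hltTotal e' e h'e with h | h
    · exact h
    · exact absurd (hltTrans _ _ _ (hltTrans _ _ _ h h4) hlt2e) (hltIrrefl _)
  rcases hP2 e1 e e' h1e h1' (Ne.symm h'e) h1 h3 hlt'e with h | h
  · exact h
  · exact absurd h h5
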